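/- arXiv:2512.02466 — 3 statements merged into one kernel-verified Lean document; each statement's English description precedes it below -/
import Mathlib

section
/- For all real 0 < α < 1 and x > 1, π(x)·log x ≤ ψ(x)/α + x^α·log x. -/
open ArithmeticFunction

theorem pi_mul_log_le (x α : ℝ) (hα0 : 0 < α) (hα1 : α < 1) (hx : 1 < x) :
    (Nat.primeCounting ⌊x⌋₊ : ℝ) * Real.log x ≤
      (∑ n ∈ Finset.Icc 1 ⌊x⌋₊, Λ n) / α + x ^ α * Real.log x := by
  set N := ⌊x⌋₊ with hN
  have hx0 : (0:ℝ) < x := lt_trans one_pos hx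
  have hlogx : 0 < Real.log x := Real.log_pos hx
  have hxα : (0:ℝ) < x ^ α := Real.rpow_pos_of_pos hx0 α
  set T := (Finset.range (N+1)).filter Nat.Prime with hT
  have hπ : (Nat.primeCounting N : ℝ) = T.card := by
    rw [Nat.primeCounting, Nat.primeCounting', Nat.count_eq_card_filter_range]
  set A := T.filter (fun p : ℕ => (p:ℝ) ≤ x ^ α) with hA
  set B := T.filter (fun p : ℕ => ¬ ((p:ℝ) ≤ x ^ α)) with hB
  have hcard : T.card = A.card + B.card :=
    (Finset.card_filter_add_card_filter_not _).symm
  have hAcard : (A.card : ℝ) ≤ x ^ α := by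
    have hsub : A ⊆ Finset.Icc 1 ⌊x ^ α⌋₊ := by
      intro p hp
      simp only [hA, Finset.mem_filter] at hp
      obtain ⟨hpT, hple⟩ := hp
      have hprime : p.Prime := (Finset.mem_filter.mp hpT).2
      exact Finset.mem_Icc.mpr ⟨hprime.one_lt.le, Nat.le_floor hple⟩
    calc (A.card : ℝ) ≤ ((Finset.Icc 1 ⌊x ^ α⌋₊).card : ℝ) := by
          exact_mod_cast Finset.card_le_card hsub
      _ = (⌊x ^ α⌋₊ : ℝ) := by rw [Nat.card_Icc]; simp
      _ ≤ x ^ α := Nat.floor_le hxα.le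
  have hBsub : B ⊆ Finset.Icc 1 N := by
    intro p hp
    simp only [hB, Finset.mem_filter, hT, Finset.mem_range] at hp
    exact Finset.mem_Icc.mpr ⟨hp.1.2.one_lt.le, Nat.lt_succ_iff.mp hp.1.1⟩
  have hBsum : (B.card : ℝ) * (α * Real.log x) ≤ ∑ n ∈ Finset.Icc 1 N, Λ n := by
    calc (B.card : ℝ) * (α * Real.log x) = ∑ _p ∈ B, α * Real.log x := by
          rw [Finset.sum_const, nsmul_eq_mul]
      _ ≤ ∑ p ∈ B, Λ p := by
          apply Finset.sum_le_sum
          intro p hp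
          simp only [hB, Finset.mem_filter] at hp
          obtain ⟨hpT, hplt⟩ := hp
          have hprime : p.Prime := (Finset.mem_filter.mp hpT).2
          rw [vonMangoldt_apply_prime hprime, ← Real.log_rpow hx0]
          exact Real.log_le_log hxα (le_of_lt (not_le.mp hplt))
      _ ≤ ∑ n ∈ Finset.Icc 1 N, Λ n :=
          Finset.sum_le_sum_of_subset_of_nonneg hBsub
            (fun n _ _ => vonMangoldt_nonneg)
  have hBdiv : (B.card : ℝ) * Real.log x ≤ (∑ n ∈ Finset.Icc 1 N, Λ n) / α := by
    rw [le_div_iff₀ hα0]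
    calc (B.card : ℝ) * Real.log x * α = (B.card : ℝ) * (α * Real.log x) := by ring
      _ ≤ _ := hBsum
  calc (Nat.primeCounting N : ℝ) * Real.log x
      = ((A.card : ℝ) + B.card) * Real.log x := by rw [hπ, hcard]; push_cast; ring
    _ = (B.card : ℝ) * Real.log x + (A.card : ℝ) * Real.log x := by ring
    _ ≤ (∑ n ∈ Finset.Icc 1 N, Λ n) / α + x ^ α * Real.log x := by
        gcongr
end

section
/- Let ν be a finitely supported function on the positive integers satisfying Σ_n ν(n)/n = 0, and define V(x) = Σ_{k ≤ x} ν(k)·T(x/k) where T(x) = Σ_{n ≤ x} log n. Then V(x) = A·x + O(log x) as x → ∞, where A = −Σ_n ν(n)·log(n)/n. -/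
open Filter Asymptotics

private lemma log_succ_le (m : ℝ) (hm : 1 ≤ m) :
    Real.log (m + 1) ≤ Real.log m + 1 / m := by
  have hm0 : (0:ℝ) < m := by linarith
  have h1 : Real.log ((m+1)/m) ≤ (m+1)/m - 1 :=
    Real.log_le_sub_one_of_pos (by positivity)
  rw [Real.log_div (by linarith) (ne_of_gt hm0)] at h1
  have h2 : (m+1)/m - 1 = 1/m := by field_simp; ring
  linarith [h2 ▸ h1]

private lemma log_succ_ge (m : ℝ) (hm : 1 ≤ m) :
    Real.log m + 1 / (m + 1) ≤ Real.log (m + 1) := by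
  have hm0 : (0:ℝ) < m := by linarith
  have h1 : 1 - ((m+1)/m)⁻¹ ≤ Real.log ((m+1)/m) :=
    Real.one_sub_inv_le_log_of_pos (by positivity)
  rw [Real.log_div (by linarith) (ne_of_gt hm0)] at h1
  have h2 : 1 - ((m+1)/m)⁻¹ = 1/(m+1) := by
    rw [inv_div]; field_simp; ring
  linarith [h2 ▸ h1]

private lemma sum_log_bounds (n : ℕ) (hn : 1 ≤ n) :
    (n:ℝ) * Real.log n - n + 1 ≤ ∑ k ∈ Finset.Icc 1 n, Real.log k ∧
    ∑ k ∈ Finset.Icc 1 n, Real.log k ≤ ((n:ℝ)+1) * Real.log ((n:ℝ)+1) - ((n:ℝ)+1) + 1 := by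
  induction n, hn using Nat.le_induction with
  | base =>
      simp only [Finset.Icc_self, Finset.sum_singleton, Nat.cast_one, Real.log_one]
      constructor
      · norm_num
      · have := Real.log_two_gt_d9
        norm_num
        nlinarith
  | succ m hm ih =>
      have hm1 : (1:ℝ) ≤ (m:ℝ) := by exact_mod_cast hm
      have hm0 : (0:ℝ) < m := by linarith
      have hsum : ∑ k ∈ Finset.Icc 1 (m+1), Real.log k
          = (∑ k ∈ Finset.Icc 1 m, Real.log k) + Real.log (m+1) := by
        rw [Finset.sum_Icc_succ_top (by omega)]
        push_cast; ring
      obtain ⟨ihL, ihU⟩ := ih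
      constructor
      · have h1 := log_succ_le (m:ℝ) hm1
        have key : (m:ℝ) * Real.log ((m:ℝ)+1) ≤ (m:ℝ) * Real.log m + 1 := by
          have h3 := mul_le_mul_of_nonneg_left h1 (le_of_lt hm0)
          have h4 : (m:ℝ) * (1/m) = 1 := by field_simp
          nlinarith
        push_cast [hsum]
        linarith
      · have h2 := log_succ_ge ((m:ℝ)+1) (by linarith)
        have key : ((m:ℝ)+2) * Real.log ((m:ℝ)+1) + 1 ≤ ((m:ℝ)+2) * Real.log ((m:ℝ)+1+1) := by
          have h3 := mul_le_mul_of_nonneg_left h2 (by linarith : (0:ℝ) ≤ (m:ℝ)+2)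
          have h4 : ((m:ℝ)+2) * (1/((m:ℝ)+1+1)) = 1 := by field_simp; ring
          nlinarith
        push_cast [hsum]
        nlinarith
private lemma G_mono : MonotoneOn (fun t : ℝ => t * Real.log t - t) (Set.Ici 1) := by
  have hder : ∀ x : ℝ, 1 < x →
      HasDerivAt (fun t : ℝ => t * Real.log t - t) (Real.log x) x := by
    intro x hx
    have h := (Real.hasDerivAt_mul_log (by linarith : x ≠ 0)).sub (hasDerivAt_id x)
    rw [show Real.log x + 1 - 1 = Real.log x by ring] at h
    exact h
  have hcont : ContinuousOn (fun t : ℝ => t * Real.log t - t) (Set.Ici 1) :=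
    (Real.continuous_mul_log.sub continuous_id).continuousOn
  apply monotoneOn_of_deriv_nonneg (convex_Ici 1) hcont
  · intro x hx
    rw [interior_Ici] at hx
    exact (hder x hx).differentiableAt.differentiableWithinAt
  · intro x hx
    rw [interior_Ici] at hx
    rw [(hder x hx).deriv]
    exact Real.log_nonneg (le_of_lt hx)

private lemma T_est (y : ℝ) (hy : 3 ≤ y) :
    |(∑ n ∈ Finset.Icc 1 ⌊y⌋₊, Real.log n) - (y * Real.log y - y)| ≤ 3 * Real.log y := by
  have hy0 : (0:ℝ) < y := by linarith
  set n := ⌊y⌋₊ with hn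
  have hn1 : 1 ≤ n := Nat.le_floor (by push_cast; linarith)
  have hn1' : (1:ℝ) ≤ (n:ℝ) := by exact_mod_cast hn1
  have hny : (n:ℝ) ≤ y := Nat.floor_le (le_of_lt hy0)
  have hyn : y < (n:ℝ) + 1 := Nat.lt_floor_add_one y
  obtain ⟨hL, hU⟩ := sum_log_bounds n hn1
  have hg1 : (n:ℝ) * Real.log n - n ≤ y * Real.log y - y :=
    G_mono (Set.mem_Ici.2 hn1') (Set.mem_Ici.2 (by linarith)) hny
  have hg2 : y * Real.log y - y ≤ ((n:ℝ)+1) * Real.log ((n:ℝ)+1) - ((n:ℝ)+1) :=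
    G_mono (Set.mem_Ici.2 (by linarith)) (Set.mem_Ici.2 (by linarith)) (le_of_lt hyn)
  have hls := log_succ_le (n:ℝ) hn1'
  have hlogn : Real.log n ≤ Real.log y := Real.log_le_log (by linarith) hny
  have hinv : ((n:ℝ)+1) * (1/(n:ℝ)) ≤ 2 := by
    rw [mul_one_div, div_le_iff₀ (by linarith)]
    linarith
  have key : ((n:ℝ)+1) * Real.log ((n:ℝ)+1) ≤ ((n:ℝ)+1) * Real.log n + 2 := by
    have h3 := mul_le_mul_of_nonneg_left hls (by linarith : (0:ℝ) ≤ (n:ℝ)+1)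
    nlinarith
  have hdelta : ((n:ℝ)+1) * Real.log ((n:ℝ)+1) - ((n:ℝ)+1) - ((n:ℝ) * Real.log n - n)
      ≤ Real.log y + 1 := by nlinarith
  have hlogy1 : 1 ≤ Real.log y := by
    rw [Real.le_log_iff_exp_le hy0]
    have := Real.exp_one_lt_d9
    linarith
  rw [abs_le]
  constructor <;> nlinarith

theorem V_asymptotic (ν : ℕ → ℝ) (hfin : (Function.support ν).Finite)
    (hc : ∑ᶠ n, ν n / n = 0) :
    (fun x : ℝ => (∑ k ∈ Finset.Icc 1 ⌊x⌋₊, ν k * ∑ n ∈ Finset.Icc 1 ⌊x / k⌋₊, Real.log n)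
        - (-∑ᶠ n, ν n * Real.log n / n) * x) =O[atTop] Real.log := by
  classical
  set s := hfin.toFinset with hs
  have hmem : ∀ k, k ∈ s ↔ ν k ≠ 0 := fun k => hfin.mem_toFinset
  have h1 : ∑ᶠ n, ν n / n = ∑ k ∈ s, ν k / k := by
    apply finsum_eq_sum_of_support_subset
    intro k hk
    simp only [Function.mem_support] at hk
    rw [Finset.mem_coe, hmem]
    intro h0; apply hk; rw [h0]; simp
  have h2 : ∑ᶠ n, ν n * Real.log n / n = ∑ k ∈ s, ν k * Real.log k / k := by
    apply finsum_eq_sum_of_support_subset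
    intro k hk
    simp only [Function.mem_support] at hk
    rw [Finset.mem_coe, hmem]
    intro h0; apply hk; rw [h0]; simp
  rw [h1] at hc
  set N := s.sup id with hN
  rw [isBigO_iff]
  refine ⟨∑ k ∈ s, |ν k| * 3, ?_⟩
  filter_upwards [eventually_ge_atTop (3 * ((N:ℝ) + 1))] with x hx
  have hN0 : (0:ℝ) ≤ N := Nat.cast_nonneg N
  have hx3 : (3:ℝ) ≤ x := by linarith
  have hx0 : (0:ℝ) < x := by linarith
  have hkN : ∀ k ∈ s, k ≤ N := fun k hk => Finset.le_sup (f := id) hk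
  have hfloorN : N ≤ ⌊x⌋₊ := Nat.le_floor (by linarith)
  have hIcc : ∑ k ∈ Finset.Icc 1 ⌊x⌋₊, ν k * ∑ n ∈ Finset.Icc 1 ⌊x / k⌋₊, Real.log n
      = ∑ k ∈ s, ν k * ∑ n ∈ Finset.Icc 1 ⌊x / k⌋₊, Real.log n := by
    have e1 : (Finset.Icc 1 ⌊x⌋₊).filter
          (fun k => ν k * (∑ n ∈ Finset.Icc 1 ⌊x / k⌋₊, Real.log n) ≠ 0)
        = s.filter (fun k => ν k * (∑ n ∈ Finset.Icc 1 ⌊x / k⌋₊, Real.log n) ≠ 0) := by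
      ext k
      simp only [Finset.mem_filter, Finset.mem_Icc, hmem]
      constructor
      · rintro ⟨⟨hk1, hk2⟩, hne⟩
        exact ⟨fun h0 => hne (by rw [h0, zero_mul]), hne⟩
      · rintro ⟨hk, hne⟩
        have hk0 : k ≠ 0 := by
          intro h0
          apply hne
          rw [h0]
          norm_num
        exact ⟨⟨Nat.one_le_iff_ne_zero.2 hk0,
          le_trans (hkN k ((hmem k).2 hk)) hfloorN⟩, hne⟩
    rw [← Finset.sum_filter_ne_zero, e1, Finset.sum_filter_ne_zero]
  rw [hIcc, h2]
  have hAx : (-∑ k ∈ s, ν k * Real.log k / k) * x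
      = ∑ k ∈ s, ν k * ((x / k) * Real.log (x / k) - x / k) := by
    have e2 : ∑ k ∈ s, ν k * ((x / k) * Real.log (x / k) - x / k)
        = ∑ k ∈ s, (x * Real.log x * (ν k / k) - x * (ν k * Real.log k / k) - x * (ν k / k)) := by
      apply Finset.sum_congr rfl
      intro k _
      rcases Nat.eq_zero_or_pos k with h0 | hk
      · subst h0; simp
      · have hk0 : (k:ℝ) ≠ 0 := Nat.cast_ne_zero.2 (Nat.pos_iff_ne_zero.1 hk)
        rw [Real.log_div (ne_of_gt hx0) hk0]
        field_simp
    have e3 : ∑ k ∈ s, (x * Real.log x * (ν k / k) - x * (ν k * Real.log k / k) - x * (ν k / k))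
        = x * Real.log x * (∑ k ∈ s, ν k / k) - x * (∑ k ∈ s, ν k * Real.log k / k)
          - x * (∑ k ∈ s, ν k / k) := by
      simp [Finset.sum_sub_distrib, Finset.mul_sum]
    rw [e2, e3, hc]
    ring
  rw [hAx, ← Finset.sum_sub_distrib]
  have hsum_eq : ∀ k ∈ s, ν k * (∑ n ∈ Finset.Icc 1 ⌊x / k⌋₊, Real.log n)
        - ν k * ((x / k) * Real.log (x / k) - x / k)
      = ν k * ((∑ n ∈ Finset.Icc 1 ⌊x / k⌋₊, Real.log n) - ((x / k) * Real.log (x / k) - x / k)) :=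
    fun k _ => by ring
  rw [Finset.sum_congr rfl hsum_eq]
  have hlogx0 : 0 ≤ Real.log x := Real.log_nonneg (by linarith)
  rw [Real.norm_eq_abs, Real.norm_eq_abs, abs_of_nonneg hlogx0]
  calc |∑ k ∈ s, ν k * ((∑ n ∈ Finset.Icc 1 ⌊x / k⌋₊, Real.log n)
          - ((x / k) * Real.log (x / k) - x / k))|
      ≤ ∑ k ∈ s, |ν k * ((∑ n ∈ Finset.Icc 1 ⌊x / k⌋₊, Real.log n)
          - ((x / k) * Real.log (x / k) - x / k))| := Finset.abs_sum_le_sum_abs _ _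
    _ ≤ ∑ k ∈ s, |ν k| * 3 * Real.log x := by
        apply Finset.sum_le_sum
        intro k hk
        rw [abs_mul]
        rcases Nat.eq_zero_or_pos k with h0 | hk1
        · subst h0
          simp only [Nat.cast_zero, div_zero, Nat.floor_zero, Real.log_zero, zero_mul, sub_zero]
          norm_num
          positivity
        · have hk0 : (0:ℝ) < (k:ℝ) := by exact_mod_cast hk1
          have hk1' : (1:ℝ) ≤ (k:ℝ) := by exact_mod_cast hk1
          have hkN' : (k:ℝ) ≤ (N:ℝ) := by exact_mod_cast hkN k hk
          have hxk3 : 3 ≤ x / k := by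
            rw [le_div_iff₀ hk0]
            nlinarith
          have hxkx : x / k ≤ x := div_le_self (le_of_lt hx0) hk1'
          have hest := T_est (x / k) hxk3
          have hlog_le : Real.log (x / k) ≤ Real.log x := Real.log_le_log (by linarith) hxkx
          have : |(∑ n ∈ Finset.Icc 1 ⌊x / k⌋₊, Real.log n)
              - ((x / k) * Real.log (x / k) - x / k)| ≤ 3 * Real.log x := by linarith
          calc |ν k| * |(∑ n ∈ Finset.Icc 1 ⌊x / k⌋₊, Real.log n)
                - ((x / k) * Real.log (x / k) - x / k)|
              ≤ |ν k| * (3 * Real.log x) :=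
                mul_le_mul_of_nonneg_left this (abs_nonneg _)
            _ = |ν k| * 3 * Real.log x := by ring
    _ = (∑ k ∈ s, |ν k| * 3) * Real.log x := by rw [Finset.sum_mul]
end

section
/- Suppose for constants A > 0, N > 1 that ψ(x) − ψ(x/N) ≤ A·x + C·log(x+2) for all x ≥ 1. Then ψ(x) ≤ (N/(N−1))·A·x + O((log x)²) as x → ∞. -/
open ArithmeticFunction Filter

private lemma psi_sum_nonneg (m : ℕ) : 0 ≤ ∑ n ∈ Finset.Icc 1 m, Λ n :=
  Finset.sum_nonneg fun _ _ => vonMangoldt_nonneg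

theorem psi_upper_bound_from_telescoping (A N C : ℝ) (hA : 0 < A) (hN : 1 < N)
    (h : ∀ x : ℝ, 1 ≤ x →
      (∑ n ∈ Finset.Icc 1 ⌊x⌋₊, Λ n) - ∑ n ∈ Finset.Icc 1 ⌊x / N⌋₊, Λ n ≤
        A * x + C * Real.log (x + 2)) :
    ∃ C' : ℝ, ∀ᶠ x : ℝ in atTop,
      ∑ n ∈ Finset.Icc 1 ⌊x⌋₊, Λ n ≤ N / (N - 1) * A * x + C' * (Real.log x) ^ 2 := by
  set M := max C 0 with hMdef
  have hM0 : (0:ℝ) ≤ M := le_max_right _ _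
  have hN0 : (0:ℝ) < N := lt_trans one_pos hN
  have hN1 : (0:ℝ) < N - 1 := by linarith
  have hlogN : 0 < Real.log N := Real.log_pos hN
  -- key induction
  have key : ∀ k : ℕ, ∀ x : ℝ, 1 ≤ x → x < N ^ k →
      ∑ n ∈ Finset.Icc 1 ⌊x⌋₊, Λ n ≤ N/(N-1)*A*x + (k:ℝ)*M*Real.log (x+2) := by
    intro k
    induction k with
    | zero => intro x hx hx'; simp at hx'; linarith
    | succ k ih =>
      intro x hx hx'
      have hlog : 0 ≤ Real.log (x+2) := Real.log_nonneg (by linarith)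
      have hbase := h x hx
      have hCM : C * Real.log (x+2) ≤ M * Real.log (x+2) :=
        mul_le_mul_of_nonneg_right (le_max_left _ _) hlog
      have hrat : (1:ℝ) ≤ N/(N-1) := by
        rw [le_div_iff₀ hN1]; linarith
      by_cases hxN : 1 ≤ x / N
      · have hxN' : x / N < N ^ k := by
          rw [div_lt_iff₀ hN0]
          calc x < N ^ (k+1) := hx'
            _ = N ^ k * N := by ring
        have ih' := ih (x/N) hxN hxN'
        have hmono : Real.log (x/N + 2) ≤ Real.log (x+2) := by
          apply Real.log_le_log (by linarith)
          have hx0 : 0 ≤ x := by linarith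
          have : x / N ≤ x := by
            rw [div_le_iff₀ hN0]; nlinarith
          linarith
        have h2 : (k:ℝ)*M*Real.log (x/N+2) ≤ (k:ℝ)*M*Real.log (x+2) :=
          mul_le_mul_of_nonneg_left hmono (by positivity)
        have harith : A * x + N/(N-1)*A*(x/N) = N/(N-1)*A*x := by
          field_simp; ring
        push_cast
        linarith
      · push_neg at hxN
        have hfl : ⌊x / N⌋₊ = 0 := Nat.floor_eq_zero.mpr hxN
        have hz : ∑ n ∈ Finset.Icc 1 ⌊x/N⌋₊, Λ n = 0 := by
          rw [hfl]; simp
        have hAx : A * x ≤ N/(N-1)*A*x := by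
          have : 0 < A * x := by positivity
          nlinarith
        have hkM : 0 ≤ (k:ℝ)*M*Real.log (x+2) := by positivity
        push_cast
        linarith
  refine ⟨2*M/Real.log N + 2*M, ?_⟩
  filter_upwards [eventually_ge_atTop (3:ℝ)] with x hx3
  have hx1 : (1:ℝ) ≤ x := by linarith
  have hx0 : (0:ℝ) < x := by linarith
  set k : ℕ := ⌊Real.logb N x⌋₊ + 1 with hkdef
  have hlogb0 : 0 ≤ Real.logb N x := Real.logb_nonneg hN hx1
  have hxk : x < N ^ k := by
    have h1 : Real.logb N x < (k:ℝ) := by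
      rw [hkdef]; push_cast
      exact Nat.lt_floor_add_one _
    have h2 : N ^ Real.logb N x < N ^ (k:ℝ) :=
      Real.rpow_lt_rpow_left_iff hN |>.mpr h1
    rw [Real.rpow_logb hN0 (ne_of_gt hN) hx0] at h2
    rwa [Real.rpow_natCast] at h2
  have hkle : (k:ℝ) ≤ Real.logb N x + 1 := by
    rw [hkdef]; push_cast
    have := Nat.floor_le hlogb0
    linarith
  have hmain := key k x hx1 hxk
  -- now bound k*M*log(x+2)
  have hlogx1 : 1 ≤ Real.log x := by
    rw [Real.le_log_iff_exp_le hx0]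
    have := Real.exp_one_lt_d9
    linarith
  have hlog2 : Real.log (x+2) ≤ 2 * Real.log x := by
    have h1 : x + 2 ≤ x^2 := by nlinarith
    calc Real.log (x+2) ≤ Real.log (x^2) := Real.log_le_log (by linarith) h1
      _ = 2 * Real.log x := by rw [Real.log_pow]; push_cast; ring
  have hlogbx : Real.logb N x = Real.log x / Real.log N := rfl
  have hkM : (k:ℝ)*M*Real.log (x+2) ≤ (2*M/Real.log N + 2*M) * (Real.log x)^2 := by
    have hlogxpos : 0 < Real.log x := by linarith
    have hlp : 0 ≤ Real.log (x+2) := Real.log_nonneg (by linarith)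
    have step1 : (k:ℝ)*M*Real.log (x+2) ≤ (Real.logb N x + 1)*M*(2*Real.log x) := by
      apply mul_le_mul (mul_le_mul_of_nonneg_right hkle hM0) hlog2 hlp
      positivity
    calc (k:ℝ)*M*Real.log (x+2) ≤ (Real.logb N x + 1)*M*(2*Real.log x) := step1
      _ = 2*M/Real.log N * (Real.log x)^2 + 2*M*Real.log x := by
          rw [hlogbx]; field_simp
      _ ≤ 2*M/Real.log N * (Real.log x)^2 + 2*M*(Real.log x)^2 := by
          have : Real.log x ≤ (Real.log x)^2 := by nlinarith
          nlinarith
      _ = (2*M/Real.log N + 2*M) * (Real.log x)^2 := by ring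
  linarith
end
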